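/- Suppose (Π_{2:T}, L) is sufficient for μ with respect to the law of X_{1:T−1} given T, and X_T given (X_{1:T−1}, T) has distribution depending on the past only through (Π_{2:T}, T). Then (L, X_T) is sufficient for μ with respect to the conditional law of X_{1:T} given (Π_{2:T}, T). -/

import Mathlib

open MeasureTheory ProbabilityTheory
open scoped ENNReal

section Aux

variable {Ω β γ E : Type*} [MeasurableSpace Ω] [MeasurableSpace β] [MeasurableSpace γ]
  [MeasurableSpace E] [StandardBorelSpace E] [Nonempty E]

/-- Measurability of a parametrized kernel integral. -/
lemma meas_aux_lintegral (κ : Kernel γ E) [IsSFiniteKernel κ] {α : Type*} [MeasurableSpace α]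
    {g : α → γ} (hg : Measurable g) {f : α × E → ℝ≥0∞} (hf : Measurable f) :
    Measurable fun a => ∫⁻ b, f (a, b) ∂κ (g a) :=
  Measurable.lintegral_kernel_prod_right (κ := κ.comap g hg) (f := fun a b => f (a, b))
    (hf.comp (measurable_fst.prodMk measurable_snd))

/-- Conditioning step: if `condDistrib Y X μ (X ω) = κ (g (X ω))` a.e., then integrals of
functions of `(X, Y)` can be computed by integrating against `κ`. -/
lemma lintegral_condDistrib_aux (μ : Measure Ω) [IsProbabilityMeasure μ]
    {X : Ω → β} {Y : Ω → E} (hX : Measurable X) (hY : Measurable Y)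
    {g : β → γ} (hg : Measurable g) (κ : Kernel γ E) [IsSFiniteKernel κ]
    (hκ : ∀ᵐ ω ∂μ, condDistrib Y X μ (X ω) = κ (g (X ω)))
    {h : β × E → ℝ≥0∞} (hh : Measurable h) :
    ∫⁻ ω, h (X ω, Y ω) ∂μ = ∫⁻ ω, ∫⁻ y, h (X ω, y) ∂(κ (g (X ω))) ∂μ := by
  haveI : IsProbabilityMeasure (μ.map fun ω => (X ω, Y ω)) :=
    Measure.isProbabilityMeasure_map (hX.prodMk hY).aemeasurable
  haveI : IsProbabilityMeasure (μ.map X) := Measure.isProbabilityMeasure_map hX.aemeasurable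
  have hmap : μ.map X ⊗ₘ condDistrib Y X μ = μ.map (fun ω => (X ω, Y ω)) := by
    rw [condDistrib, ← Measure.fst_map_prodMk₀ hY.aemeasurable,
      Measure.disintegrate]
  have h1 : ∫⁻ ω, h (X ω, Y ω) ∂μ = ∫⁻ p, h p ∂(μ.map fun ω => (X ω, Y ω)) :=
    (lintegral_map hh (hX.prodMk hY)).symm
  have h2 : Measurable fun x => ∫⁻ y, h (x, y) ∂condDistrib Y X μ x :=
    Measurable.lintegral_kernel_prod_right (κ := condDistrib Y X μ) (f := fun x y => h (x, y))
      (hh.comp (measurable_fst.prodMk measurable_snd))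
  rw [h1, ← hmap, Measure.lintegral_compProd hh, lintegral_map h2 hX]
  exact lintegral_congr_ae <| by filter_upwards [hκ] with ω hω using by rw [hω]

end Aux

/-- if `(Π_{2:T}, L)` (here `(π(A,T), L(A,T))`) is sufficient for `μ` (here the
parameter `θ`) with respect to the law of the past data `A = X_{1:T−1}` given `T`, and the
conditional law of the last batch `B = X_T` given `(A, T)` depends on the past only through
`(π(A,T), T)` (with a `θ`-free kernel), then `(L, X_T)` is sufficient for `θ` with respect to
the conditional law of `(A, B) = X_{1:T}` given `(Π_{2:T}, T)`: the conditional distribution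
of the data given `((L, X_T), (Π_{2:T}, T))` admits a `θ`-free version `κ₃`. -/
theorem sufficiency_composition
    {Ω 𝒜 ℬ PSp Θ : Type*}
    [MeasurableSpace Ω]
    [MeasurableSpace 𝒜] [StandardBorelSpace 𝒜] [Nonempty 𝒜]
    [MeasurableSpace ℬ] [StandardBorelSpace ℬ] [Nonempty ℬ]
    [MeasurableSpace PSp]
    (P : Θ → Measure Ω) (hP : ∀ θ, IsProbabilityMeasure (P θ))
    (A : Ω → 𝒜) (B : Ω → ℬ) (T : Ω → ℕ)
    (hA : Measurable A) (hB : Measurable B) (hT : Measurable T)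
    (π : 𝒜 → ℕ → PSp) (L : 𝒜 → ℕ → ℝ)
    (hπ : Measurable fun q : 𝒜 × ℕ => π q.1 q.2)
    (hL : Measurable fun q : 𝒜 × ℕ => L q.1 q.2)
    (κ₁ : Kernel (PSp × ℝ × ℕ) 𝒜)
    (hsuff : ∀ θ, haveI := hP θ; ∀ᵐ ω ∂P θ,
      condDistrib A (fun ω' => (π (A ω') (T ω'), L (A ω') (T ω'), T ω')) (P θ)
          (π (A ω) (T ω), L (A ω) (T ω), T ω)
        = κ₁ (π (A ω) (T ω), L (A ω) (T ω), T ω))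
    (κ₂ : Kernel (PSp × ℕ) ℬ)
    (hcondB : ∀ θ, haveI := hP θ; ∀ᵐ ω ∂P θ,
      condDistrib B (fun ω' => (A ω', T ω')) (P θ) (A ω, T ω)
        = κ₂ (π (A ω) (T ω), T ω)) :
    ∃ κ₃ : Kernel ((ℝ × ℬ) × PSp × ℕ) (𝒜 × ℬ),
      ∀ θ, haveI := hP θ; ∀ᵐ ω ∂P θ,
        condDistrib (fun ω' => (A ω', B ω'))
            (fun ω' => ((L (A ω') (T ω'), B ω'), (π (A ω') (T ω'), T ω'))) (P θ)
            ((L (A ω) (T ω), B ω), (π (A ω) (T ω), T ω))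
          = κ₃ ((L (A ω) (T ω), B ω), (π (A ω) (T ω), T ω)) := by
  classical
  have hAT : Measurable fun ω => (A ω, T ω) := hA.prodMk hT
  have hπo : Measurable fun ω => π (A ω) (T ω) := hπ.comp hAT
  have hLo : Measurable fun ω => L (A ω) (T ω) := hL.comp hAT
  set W : Ω → PSp × ℝ × ℕ := fun ω => (π (A ω) (T ω), L (A ω) (T ω), T ω) with hW_def
  have hWm : Measurable W := hπo.prodMk (hLo.prodMk hT)
  set S : Ω → (ℝ × ℬ) × PSp × ℕ :=
    fun ω => ((L (A ω) (T ω), B ω), (π (A ω) (T ω), T ω)) with hS_def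
  have hSm : Measurable S := (hLo.prodMk hB).prodMk (hπo.prodMk hT)
  set Y : Ω → 𝒜 × ℬ := fun ω => (A ω, B ω) with hY_def
  have hYm : Measurable Y := hA.prodMk hB
  -- Markov modifications of κ₁ and κ₂
  have hG₁ : MeasurableSet {w : PSp × ℝ × ℕ | κ₁ w Set.univ = 1} :=
    (Kernel.measurable_coe κ₁ MeasurableSet.univ) (measurableSet_singleton 1)
  set κ₁' : Kernel (PSp × ℝ × ℕ) 𝒜 :=
    Kernel.piecewise hG₁ κ₁ (Kernel.const _ (Measure.dirac (Classical.arbitrary 𝒜)))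
    with hκ₁'_def
  haveI : IsMarkovKernel κ₁' := by
    constructor
    intro w
    rw [hκ₁'_def, Kernel.piecewise_apply]
    split_ifs with h
    · exact ⟨h⟩
    · rw [Kernel.const_apply]; infer_instance
  have hG₂ : MeasurableSet {w : PSp × ℕ | κ₂ w Set.univ = 1} :=
    (Kernel.measurable_coe κ₂ MeasurableSet.univ) (measurableSet_singleton 1)
  set κ₂' : Kernel (PSp × ℕ) ℬ :=
    Kernel.piecewise hG₂ κ₂ (Kernel.const _ (Measure.dirac (Classical.arbitrary ℬ)))
    with hκ₂'_def
  haveI : IsMarkovKernel κ₂' := by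
    constructor
    intro w
    rw [hκ₂'_def, Kernel.piecewise_apply]
    split_ifs with h
    · exact ⟨h⟩
    · rw [Kernel.const_apply]; infer_instance
  -- the candidate kernel
  have hf : Measurable fun s : (ℝ × ℬ) × PSp × ℕ => (s.2.1, s.1.1, s.2.2) :=
    (measurable_fst.comp measurable_snd).prodMk
      ((measurable_fst.comp measurable_fst).prodMk (measurable_snd.comp measurable_snd))
  set κ₃ : Kernel ((ℝ × ℬ) × PSp × ℕ) (𝒜 × ℬ) :=
    (κ₁'.comap (fun s => (s.2.1, s.1.1, s.2.2)) hf) ×ₖ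
      (Kernel.deterministic (fun s : (ℝ × ℬ) × PSp × ℕ => s.1.2)
        (measurable_snd.comp measurable_fst)) with hκ₃_def
  haveI : IsMarkovKernel κ₃ := by rw [hκ₃_def]; infer_instance
  refine ⟨κ₃, fun θ => ?_⟩
  haveI := hP θ
  set μ := P θ with hμ_def
  -- modified hypotheses with the Markov kernels
  have hsuff' : ∀ᵐ ω ∂μ, condDistrib A W μ (W ω) = κ₁' (W ω) := by
    filter_upwards [hsuff θ] with ω hω
    have huniv : κ₁ (W ω) Set.univ = 1 := by
      rw [← hω]; exact measure_univ
    have hmem : W ω ∈ {w : PSp × ℝ × ℕ | κ₁ w Set.univ = 1} := huniv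
    rw [hκ₁'_def, Kernel.piecewise_apply, if_pos hmem]
    exact hω
  have hcondB' : ∀ᵐ ω ∂μ,
      condDistrib B (fun ω' => (A ω', T ω')) μ (A ω, T ω) = κ₂' (π (A ω) (T ω), T ω) := by
    filter_upwards [hcondB θ] with ω hω
    have huniv : κ₂ (π (A ω) (T ω), T ω) Set.univ = 1 := by
      rw [← hω]; exact measure_univ
    have hmem : (π (A ω) (T ω), T ω) ∈ {w : PSp × ℕ | κ₂ w Set.univ = 1} := huniv
    rw [hκ₂'_def, Kernel.piecewise_apply, if_pos hmem]
    exact hω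
  -- key identity: the joint law of (S, Y) is the compProd of the law of S with κ₃
  have key : μ.map (fun ω => (S ω, Y ω)) = (μ.map S) ⊗ₘ κ₃ := by
    haveI : IsProbabilityMeasure (μ.map S) := Measure.isProbabilityMeasure_map hSm.aemeasurable
    haveI : IsProbabilityMeasure (μ.map fun ω => (S ω, Y ω)) :=
      Measure.isProbabilityMeasure_map (hSm.prodMk hYm).aemeasurable
    refine MeasureTheory.ext_of_generate_finite _ generateFrom_prod.symm isPiSystem_prod ?_ ?_
    swap
    · rw [Measure.compProd_apply_univ]
      simp [measure_univ]
    rintro _ ⟨u, hu, v, hv, rfl⟩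
    simp only [Set.mem_setOf_eq] at hu hv
    -- indicators
    set Iu : (ℝ × ℬ) × PSp × ℕ → ℝ≥0∞ := u.indicator 1 with hIu_def
    set Iv : 𝒜 × ℬ → ℝ≥0∞ := v.indicator 1 with hIv_def
    have hIum : Measurable Iu := measurable_one.indicator hu
    have hIvm : Measurable Iv := measurable_one.indicator hv
    -- the integrand functions
    set h₀ : (𝒜 × ℕ) × ℬ → ℝ≥0∞ :=
      fun q => Iu ((L q.1.1 q.1.2, q.2), (π q.1.1 q.1.2, q.1.2)) * Iv (q.1.1, q.2) with hh₀_def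
    have hh₀m : Measurable h₀ := by
      apply Measurable.mul
      · exact hIum.comp
          (((hL.comp measurable_fst).prodMk measurable_snd).prodMk
            ((hπ.comp measurable_fst).prodMk (measurable_snd.comp measurable_fst)))
      · exact hIvm.comp ((measurable_fst.comp measurable_fst).prodMk measurable_snd)
    set g₀ : (PSp × ℝ × ℕ) × 𝒜 → ℝ≥0∞ :=
      fun q => ∫⁻ b, Iu ((q.1.2.1, b), (q.1.1, q.1.2.2)) * Iv (q.2, b)
        ∂(κ₂' (q.1.1, q.1.2.2)) with hg₀_def
    have hg₀m : Measurable g₀ := by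
      refine meas_aux_lintegral κ₂'
        ((measurable_fst.comp measurable_fst).prodMk
          (measurable_snd.comp (measurable_snd.comp measurable_fst)))
        (f := fun r : ((PSp × ℝ × ℕ) × 𝒜) × ℬ =>
          Iu ((r.1.1.2.1, r.2), (r.1.1.1, r.1.1.2.2)) * Iv (r.1.2, r.2)) ?_
      apply Measurable.mul
      · exact hIum.comp
          ((((measurable_fst.comp (measurable_snd.comp (measurable_fst.comp
              measurable_fst)))).prodMk measurable_snd).prodMk
            ((measurable_fst.comp (measurable_fst.comp measurable_fst)).prodMk
              (measurable_snd.comp (measurable_snd.comp (measurable_fst.comp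
                measurable_fst)))))
      · exact hIvm.comp ((measurable_snd.comp measurable_fst).prodMk measurable_snd)
    set g₁ : (PSp × ℝ × ℕ) × ℬ → ℝ≥0∞ :=
      fun q => Iu ((q.1.2.1, q.2), (q.1.1, q.1.2.2)) *
        ∫⁻ a, Iv (a, q.2) ∂(κ₁' q.1) with hg₁_def
    have hg₁m : Measurable g₁ := by
      apply Measurable.mul
      · exact hIum.comp
          (((measurable_fst.comp (measurable_snd.comp measurable_fst)).prodMk
            measurable_snd).prodMk
            ((measurable_fst.comp measurable_fst).prodMk
              (measurable_snd.comp (measurable_snd.comp measurable_fst))))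
      · exact meas_aux_lintegral κ₁' measurable_fst
          (f := fun r : ((PSp × ℝ × ℕ) × ℬ) × 𝒜 => Iv (r.2, r.1.2))
          (hIvm.comp (measurable_snd.prodMk (measurable_snd.comp measurable_fst)))
    set h₁ : (𝒜 × ℕ) × ℬ → ℝ≥0∞ :=
      fun q => g₁ ((π q.1.1 q.1.2, L q.1.1 q.1.2, q.1.2), q.2) with hh₁_def
    have hh₁m : Measurable h₁ :=
      hg₁m.comp (((hπ.comp measurable_fst).prodMk
        ((hL.comp measurable_fst).prodMk (measurable_snd.comp measurable_fst))).prodMk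
        measurable_snd)
    -- LHS computation
    have hLHS : μ.map (fun ω => (S ω, Y ω)) (u ×ˢ v)
        = ∫⁻ ω, h₀ ((A ω, T ω), B ω) ∂μ := by
      rw [Measure.map_apply (hSm.prodMk hYm) (hu.prod hv), Set.mk_preimage_prod,
        ← lintegral_indicator_one ((hSm hu).inter (hYm hv))]
      refine lintegral_congr fun ω => ?_
      by_cases h1 : S ω ∈ u <;> by_cases h2 : Y ω ∈ v <;>
        simp [hh₀_def, hIu_def, hIv_def, Set.indicator_apply, h1, h2, Set.mem_inter_iff,
          hS_def, hY_def] <;> simp_all [hS_def, hY_def]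
    have hstepB₀ : ∫⁻ ω, h₀ ((A ω, T ω), B ω) ∂μ
        = ∫⁻ ω, ∫⁻ b, h₀ ((A ω, T ω), b) ∂(κ₂' (π (A ω) (T ω), T ω)) ∂μ :=
      lintegral_condDistrib_aux μ hAT hB (hπ.prodMk measurable_snd) κ₂' hcondB' hh₀m
    have hinner₀ : ∀ ω, (∫⁻ b, h₀ ((A ω, T ω), b) ∂(κ₂' (π (A ω) (T ω), T ω)))
        = g₀ (W ω, A ω) := fun ω => rfl
    have hstepA : ∫⁻ ω, g₀ (W ω, A ω) ∂μ
        = ∫⁻ ω, ∫⁻ a, g₀ (W ω, a) ∂(κ₁' (W ω)) ∂μ :=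
      lintegral_condDistrib_aux μ hWm hA measurable_id κ₁' hsuff' hg₀m
    -- Fubini swap
    have hswap : ∀ w : PSp × ℝ × ℕ,
        (∫⁻ a, g₀ (w, a) ∂(κ₁' w)) = ∫⁻ b, g₁ (w, b) ∂(κ₂' (w.1, w.2.2)) := by
      intro w
      have hF : AEMeasurable (Function.uncurry fun a b =>
          Iu ((w.2.1, b), (w.1, w.2.2)) * Iv (a, b)) ((κ₁' w).prod (κ₂' (w.1, w.2.2))) := by
        refine Measurable.aemeasurable ?_
        apply Measurable.mul
        · exact hIum.comp ((measurable_const.prodMk measurable_snd).prodMk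
            measurable_const)
        · exact hIvm.comp (measurable_fst.prodMk measurable_snd)
      calc (∫⁻ a, g₀ (w, a) ∂(κ₁' w))
          = ∫⁻ a, ∫⁻ b, Iu ((w.2.1, b), (w.1, w.2.2)) * Iv (a, b)
              ∂(κ₂' (w.1, w.2.2)) ∂(κ₁' w) := rfl
        _ = ∫⁻ b, ∫⁻ a, Iu ((w.2.1, b), (w.1, w.2.2)) * Iv (a, b)
              ∂(κ₁' w) ∂(κ₂' (w.1, w.2.2)) := lintegral_lintegral_swap hF
        _ = ∫⁻ b, g₁ (w, b) ∂(κ₂' (w.1, w.2.2)) := by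
            refine lintegral_congr fun b => ?_
            rw [hg₁_def]
            exact lintegral_const_mul _ (hIvm.comp (measurable_id.prodMk measurable_const))
    -- RHS computation
    have hκ₃app : ∀ ω, κ₃ (S ω) v = ∫⁻ a, Iv (a, B ω) ∂(κ₁' (W ω)) := by
      intro ω
      rw [hκ₃_def]
      rw [Kernel.prod_apply' _ _ _ hv]
      rw [Kernel.comap_apply]
      refine lintegral_congr fun a => ?_
      rw [Kernel.deterministic_apply' _ _
        (show MeasurableSet (Prod.mk a ⁻¹' v) from measurable_prodMk_left hv)]
      by_cases hmem : (a, B ω) ∈ v <;>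
        simp [hIv_def, Set.indicator_apply, hmem, hS_def]
    have hRHS : ((μ.map S) ⊗ₘ κ₃) (u ×ˢ v) = ∫⁻ ω, h₁ ((A ω, T ω), B ω) ∂μ := by
      rw [Measure.compProd_apply_prod hu hv,
        setLIntegral_map hu (Kernel.measurable_coe κ₃ hv) hSm,
        ← lintegral_indicator (hSm hu)]
      refine lintegral_congr fun ω => ?_
      have : h₁ ((A ω, T ω), B ω) = Iu (S ω) * κ₃ (S ω) v := by
        rw [hh₁_def, hg₁_def, hκ₃app ω]
      rw [this]
      by_cases h1 : S ω ∈ u <;> simp [Set.indicator_apply, h1, hIu_def]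
    have hstepB₁ : ∫⁻ ω, h₁ ((A ω, T ω), B ω) ∂μ
        = ∫⁻ ω, ∫⁻ b, h₁ ((A ω, T ω), b) ∂(κ₂' (π (A ω) (T ω), T ω)) ∂μ :=
      lintegral_condDistrib_aux μ hAT hB (hπ.prodMk measurable_snd) κ₂' hcondB' hh₁m
    rw [hLHS, hstepB₀, hRHS, hstepB₁]
    simp only [hinner₀]
    rw [hstepA]
    refine lintegral_congr fun ω => ?_
    rw [hswap (W ω)]
  -- conclude via the uniqueness of condDistrib
  have huniq := condDistrib_ae_eq_of_measure_eq_compProd_of_measurable hSm hYm (κ := κ₃) key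
  have hae := ae_of_ae_map hSm.aemeasurable huniq
  filter_upwards [hae] with ω hω
  exact hω
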